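/- Let Z be a finite set, 1 ≤ m ≤ n, and z ∈ Z^n. Let (I_1,…,I_m) be a uniformly random injective m-tuple with entries in {1,…,n}, and let z̃ = (z_{I_1},…,z_{I_m}). Then the expected ℓ2-norm sampling error of the type satisfies E‖T_{z̃} − T_z‖₂ ≤ 1/√m. -/

import Mathlib

open Finset

/-- The type (empirical distribution) of a sequence `z ∈ Z^n`. -/
noncomputable def typeOf {Z : Type*} [DecidableEq Z] {n : ℕ} (z : Fin n → Z) : Z → ℝ :=
  fun a => ((Finset.univ.filter fun i => z i = a).card : ℝ) / n

/-- The set of injective `m`-tuples with entries in `{1,…,n}`. -/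
def Theta (m n : ℕ) : Finset (Fin m → Fin n) :=
  Finset.univ.filter Function.Injective

/-- The expected ℓ2-norm error of the sampled type under uniform sampling
without replacement is at most `1/√m`. -/

lemma mem_Theta {m n : ℕ} {π : Fin m → Fin n} : π ∈ Theta m n ↔ Function.Injective π := by
  simp [Theta]

/-- composing with a permutation preserves Theta, giving bijections between fibers -/
lemma perm_fiber_card {m n : ℕ} (σ : Equiv.Perm (Fin n)) (p : (Fin m → Fin n) → Prop)
    [DecidablePred p] :
    ((Theta m n).filter p).card = ((Theta m n).filter (fun π => p (⇑σ.symm ∘ π))).card := by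
  apply Finset.card_nbij' (fun π => σ ∘ π) (fun π => ⇑σ.symm ∘ π)
  · intro π hπ
    simp only [Finset.mem_coe, mem_filter, mem_Theta] at hπ ⊢
    refine ⟨σ.injective.comp hπ.1, ?_⟩
    have : ⇑σ.symm ∘ (σ ∘ π) = π := by ext x; simp
    rw [this]; exact hπ.2
  · intro π hπ
    simp only [Finset.mem_coe, mem_filter, mem_Theta] at hπ ⊢
    exact ⟨σ.symm.injective.comp hπ.1, hπ.2⟩
  · intro π _; ext x; simp
  · intro π _; ext x; simp

lemma fiber_card_eq {m n : ℕ} (j : Fin m) (i i' : Fin n) :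
    ((Theta m n).filter (fun π => π j = i)).card
      = ((Theta m n).filter (fun π => π j = i')).card := by
  rw [perm_fiber_card (Equiv.swap i i') (fun π => π j = i)]
  congr 1
  apply Finset.filter_congr
  intro π _
  simp [Equiv.apply_eq_iff_eq_symm_apply]

lemma card_single {m n : ℕ} (j : Fin m) (i : Fin n) :
    (Theta m n).card = n * ((Theta m n).filter (fun π => π j = i)).card := by
  rw [Finset.card_eq_sum_card_fiberwise (f := fun π => π j) (t := univ) (fun π _ => mem_univ _)]
  rw [Finset.sum_congr rfl (fun i' _ => fiber_card_eq j i' i)]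
  simp [mul_comm]

lemma sum_single {m n : ℕ} (j : Fin m) (g : Fin n → ℝ) :
    (n : ℝ) * ∑ π ∈ Theta m n, g (π j) = ((Theta m n).card : ℝ) * ∑ i, g i := by
  have h : ∑ π ∈ Theta m n, g (π j)
      = ∑ i : Fin n, ∑ π ∈ (Theta m n).filter (fun π => π j = i), g (π j) :=
    (Finset.sum_fiberwise_of_maps_to (fun π _ => mem_univ _) _).symm
  rw [h, Finset.mul_sum, Finset.mul_sum]
  apply Finset.sum_congr rfl
  intro i _
  have h2 : ∑ π ∈ (Theta m n).filter (fun π => π j = i), g (π j)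
      = (((Theta m n).filter (fun π => π j = i)).card : ℝ) * g i := by
    rw [Finset.sum_congr rfl (fun π hπ => by rw [(mem_filter.mp hπ).2]),
      Finset.sum_const, nsmul_eq_mul]
  rw [h2, ← mul_assoc, ← Nat.cast_mul, ← card_single j i]

lemma exists_perm_pair {n : ℕ} {i i' u u' : Fin n} (h1 : i ≠ i') (h2 : u ≠ u') :
    ∃ σ : Equiv.Perm (Fin n), σ i = u ∧ σ i' = u' := by
  refine ⟨(Equiv.swap i u).trans (Equiv.swap (Equiv.swap i u i') u'), ?_, ?_⟩
  · simp only [Equiv.trans_apply, Equiv.swap_apply_left]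
    apply Equiv.swap_apply_of_ne_of_ne
    · rcases eq_or_ne i' u with rfl | hne
      · rw [Equiv.swap_apply_right]
        exact fun h => h1 (h ▸ rfl)
      · rw [Equiv.swap_apply_of_ne_of_ne (Ne.symm h1) hne]
        exact hne.symm
    · exact h2
  · simp only [Equiv.trans_apply]
    exact Equiv.swap_apply_left _ _

lemma pair_fiber_card_eq {m n : ℕ} (j k : Fin m) {i i' u u' : Fin n}
    (h1 : i ≠ i') (h2 : u ≠ u') :
    ((Theta m n).filter (fun π => π j = i ∧ π k = i')).card
      = ((Theta m n).filter (fun π => π j = u ∧ π k = u')).card := by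
  obtain ⟨σ, hσ1, hσ2⟩ := exists_perm_pair h1 h2
  rw [perm_fiber_card σ (fun π => π j = i ∧ π k = i')]
  congr 1
  apply Finset.filter_congr
  intro π _
  simp only [Function.comp_apply, Equiv.symm_apply_eq, hσ1, hσ2]

lemma card_pair {m n : ℕ} (j k : Fin m) (hjk : j ≠ k) (i i' : Fin n) (hii' : i ≠ i') :
    (Theta m n).card
      = (n * n - n) * ((Theta m n).filter (fun π => π j = i ∧ π k = i')).card := by
  rw [Finset.card_eq_sum_card_fiberwise (f := fun π => (π j, π k)) (t := univ)
    (fun π _ => mem_univ _)]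
  rw [← Finset.sum_filter_add_sum_filter_not univ (fun p : Fin n × Fin n => p.1 ≠ p.2)]
  have hdiag : ∑ p ∈ univ.filter (fun p : Fin n × Fin n => ¬ p.1 ≠ p.2),
      ((Theta m n).filter (fun π => (π j, π k) = p)).card = 0 := by
    apply Finset.sum_eq_zero
    intro p hp
    simp only [mem_filter, not_not, mem_univ, true_and] at hp
    rw [Finset.card_eq_zero, Finset.filter_eq_empty_iff]
    intro π hπ h
    have hinj := mem_Theta.mp hπ
    apply hjk
    apply hinj
    have h1 : π j = p.1 := congrArg Prod.fst h
    have h2 : π k = p.2 := congrArg Prod.snd h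
    rw [h1, h2, hp]
  have hoff : ∀ p ∈ univ.filter (fun p : Fin n × Fin n => p.1 ≠ p.2),
      ((Theta m n).filter (fun π => (π j, π k) = p)).card
        = ((Theta m n).filter (fun π => π j = i ∧ π k = i')).card := by
    intro p hp
    simp only [mem_filter, mem_univ, true_and] at hp
    have heq : ((Theta m n).filter (fun π => (π j, π k) = p))
        = ((Theta m n).filter (fun π => π j = p.1 ∧ π k = p.2)) := by
      apply Finset.filter_congr
      intro π _
      simp [Prod.ext_iff]
    rw [heq]
    exact pair_fiber_card_eq j k hp hii'
  rw [Finset.sum_congr rfl hoff, hdiag, Finset.sum_const, add_zero, smul_eq_mul]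
  congr 1
  have huniv : univ.filter (fun p : Fin n × Fin n => p.1 ≠ p.2)
      = (univ : Finset (Fin n)).offDiag := by
    rw [show (univ : Finset (Fin n)).offDiag
        = ((univ ×ˢ univ : Finset (Fin n × Fin n)).filter (fun p => p.1 ≠ p.2)) from by ext p; simp,
      Finset.univ_product_univ]
  rw [huniv, Finset.offDiag_card, Finset.card_univ, Fintype.card_fin]

lemma sum_pair {m n : ℕ} (j k : Fin m) (hjk : j ≠ k) (g h : Fin n → ℝ) :
    ((n * n - n : ℕ) : ℝ) * ∑ π ∈ Theta m n, g (π j) * h (π k)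
      = ((Theta m n).card : ℝ) * ∑ p ∈ (univ : Finset (Fin n)).offDiag, g p.1 * h p.2 := by
  classical
  have hfib : ∑ π ∈ Theta m n, g (π j) * h (π k)
      = ∑ p ∈ (univ : Finset (Fin n × Fin n)),
          ∑ π ∈ (Theta m n).filter (fun π => (π j, π k) = p), g (π j) * h (π k) :=
    (Finset.sum_fiberwise_of_maps_to (fun π _ => mem_univ _) _).symm
  rw [hfib, ← Finset.sum_filter_add_sum_filter_not univ (fun p : Fin n × Fin n => p.1 ≠ p.2)]
  have hdiag : ∑ p ∈ univ.filter (fun p : Fin n × Fin n => ¬ p.1 ≠ p.2),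
      ∑ π ∈ (Theta m n).filter (fun π => (π j, π k) = p), g (π j) * h (π k) = 0 := by
    apply Finset.sum_eq_zero
    intro p hp
    simp only [mem_filter, not_not, mem_univ, true_and] at hp
    have : (Theta m n).filter (fun π => (π j, π k) = p) = ∅ := by
      rw [Finset.filter_eq_empty_iff]
      intro π hπ hcontr
      apply hjk
      apply mem_Theta.mp hπ
      have h1 : π j = p.1 := congrArg Prod.fst hcontr
      have h2 : π k = p.2 := congrArg Prod.snd hcontr
      rw [h1, h2, hp]
    rw [this, Finset.sum_empty]
  rw [hdiag, add_zero]
  have huniv : univ.filter (fun p : Fin n × Fin n => p.1 ≠ p.2)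
      = (univ : Finset (Fin n)).offDiag := by
    rw [show (univ : Finset (Fin n)).offDiag
        = ((univ ×ˢ univ : Finset (Fin n × Fin n)).filter (fun p => p.1 ≠ p.2)) from by ext p; simp,
      Finset.univ_product_univ]
  rw [huniv, Finset.mul_sum, Finset.mul_sum]
  apply Finset.sum_congr rfl
  intro p hp
  have hp' : p.1 ≠ p.2 := (Finset.mem_offDiag.mp hp).2.2
  have hinner : ∑ π ∈ (Theta m n).filter (fun π => (π j, π k) = p), g (π j) * h (π k)
      = (((Theta m n).filter (fun π => (π j, π k) = p)).card : ℝ) * (g p.1 * h p.2) := by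
    have hterm : ∀ π ∈ (Theta m n).filter (fun π => (π j, π k) = p),
        g (π j) * h (π k) = g p.1 * h p.2 := by
      intro π hπ
      have h' := (mem_filter.mp hπ).2
      rw [show π j = p.1 from congrArg Prod.fst h', show π k = p.2 from congrArg Prod.snd h']
    rw [Finset.sum_congr rfl hterm, Finset.sum_const, nsmul_eq_mul]
  rw [hinner, ← mul_assoc, ← Nat.cast_mul]
  have heq : ((Theta m n).filter (fun π => (π j, π k) = p))
      = ((Theta m n).filter (fun π => π j = p.1 ∧ π k = p.2)) := by
    apply Finset.filter_congr
    intro π _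
    simp [Prod.ext_iff]
  rw [heq, ← card_pair j k hjk p.1 p.2 hp']

lemma sum_pair_le {m n : ℕ} (hmn : m ≤ n) (j k : Fin m) (hjk : j ≠ k) (g : Fin n → ℝ)
    (hg : ∀ i, g i = 0 ∨ g i = 1) :
    (n : ℝ)^2 * ∑ π ∈ Theta m n, g (π j) * g (π k)
      ≤ ((Theta m n).card : ℝ) * (∑ i, g i)^2 := by
  classical
  have hn2 : 2 ≤ n := by
    rcases lt_or_ge n 2 with h | h
    · exfalso; apply hjk
      have hm2 : m ≤ 1 := le_trans hmn (by omega)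
      exact Fin.ext (by omega)
    · exact h
  set N := ((Theta m n).card : ℝ) with hNdef
  set S := ∑ i, g i with hSdef
  set T := ∑ π ∈ Theta m n, g (π j) * g (π k) with hTdef
  have hid := sum_pair j k hjk g g
  have hcast : ((n * n - n : ℕ) : ℝ) = (n : ℝ) * n - n := by
    have : n ≤ n * n := Nat.le_mul_of_pos_left n (by omega)
    push_cast [Nat.cast_sub this]
    ring
  have hoff : ∑ p ∈ (univ : Finset (Fin n)).offDiag, g p.1 * g p.2 = S^2 - S := by
    have hsplit := Finset.sum_filter_add_sum_filter_not
      ((univ : Finset (Fin n)) ×ˢ univ) (fun p : Fin n × Fin n => p.1 ≠ p.2)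
      (fun p => g p.1 * g p.2)
    have hprod : ∑ p ∈ (univ : Finset (Fin n)) ×ˢ univ, g p.1 * g p.2 = S * S := by
      rw [Finset.sum_product]
      simp_rw [← Finset.mul_sum]
      rw [← Finset.sum_mul]
    have hdiageq : ((univ : Finset (Fin n)) ×ˢ univ).filter (fun p => ¬ p.1 ≠ p.2)
        = (univ : Finset (Fin n)).diag := by
      ext p
      simp [Finset.mem_diag, not_not]
    have hdiagsum : ∑ p ∈ ((univ : Finset (Fin n)) ×ˢ univ).filter (fun p => ¬ p.1 ≠ p.2),
        g p.1 * g p.2 = S := by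
      rw [hdiageq, Finset.sum_diag]
      apply Finset.sum_congr rfl
      intro i _
      rcases hg i with h | h <;> rw [h] <;> ring
    have hoffeq : (univ : Finset (Fin n)).offDiag
        = ((univ : Finset (Fin n)) ×ˢ univ).filter (fun p => p.1 ≠ p.2) := by ext p; simp
    rw [hoffeq]
    rw [hprod, hdiagsum] at hsplit
    linarith
  rw [hcast, hoff] at hid
  have hS0 : 0 ≤ S := Finset.sum_nonneg fun i _ => by rcases hg i with h | h <;> rw [h] <;> norm_num
  have hSn : S ≤ n := by
    calc S ≤ ∑ _i : Fin n, (1:ℝ) := Finset.sum_le_sum fun i _ => by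
            rcases hg i with h | h <;> rw [h] <;> norm_num
      _ = n := by simp
  have hN0 : (0:ℝ) ≤ N := Nat.cast_nonneg _
  have hD : (0:ℝ) < (n:ℝ) * n - n := by
    have : (2:ℝ) ≤ n := by exact_mod_cast hn2
    nlinarith
  have key : (0:ℝ) ≤ N * S * ((n:ℝ) - S) * n := by
    apply mul_nonneg
    apply mul_nonneg
    apply mul_nonneg hN0 hS0
    · linarith
    · positivity
  have hmain : ((n:ℝ) * n - n) * ((n:ℝ)^2 * T) ≤ ((n:ℝ) * n - n) * (N * S^2) := by
    have h2 : ((n:ℝ) * n - n) * ((n:ℝ)^2 * T) = (n:ℝ)^2 * (N * (S^2 - S)) := by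
      rw [← hid]; ring
    nlinarith [key, h2]
  exact le_of_mul_le_mul_left hmain hD

lemma per_a {m n : ℕ} (hm : 1 ≤ m) (hmn : m ≤ n) (g : Fin n → ℝ)
    (hg : ∀ i, g i = 0 ∨ g i = 1) :
    ∑ π ∈ Theta m n, ((∑ j, g (π j)) / m - (∑ i, g i) / n)^2
      ≤ ((Theta m n).card : ℝ) * ((∑ i, g i) / n) / m := by
  classical
  have hn : 1 ≤ n := le_trans hm hmn
  have hmR : (1:ℝ) ≤ m := by exact_mod_cast hm
  have hnR : (1:ℝ) ≤ n := by exact_mod_cast hn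
  have hm0 : (0:ℝ) < m := by linarith
  have hn0 : (0:ℝ) < n := by linarith
  set N := ((Theta m n).card : ℝ) with hNdef
  set S := ∑ i, g i with hSdef
  set A : (Fin m → Fin n) → ℝ := fun π => ∑ j, g (π j) with hAdef
  set E := ∑ π ∈ Theta m n, (A π / m - S / n)^2 with hEdef
  have hN0 : (0:ℝ) ≤ N := Nat.cast_nonneg _
  have hS0 : 0 ≤ S := Finset.sum_nonneg fun i _ => by rcases hg i with h | h <;> rw [h] <;> norm_num
  -- sum of A
  have hsingle : ∀ j : Fin m, (n:ℝ) * ∑ π ∈ Theta m n, g (π j) = N * S := fun j => sum_single j g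
  have hA : (n:ℝ) * ∑ π ∈ Theta m n, A π = (m:ℝ) * N * S := by
    have hc : ∑ π ∈ Theta m n, A π = ∑ j : Fin m, ∑ π ∈ Theta m n, g (π j) := Finset.sum_comm
    rw [hc, Finset.mul_sum, Finset.sum_congr rfl (fun j _ => hsingle j), Finset.sum_const]
    simp [mul_assoc]
  -- sum of A^2
  have hA2 : (n:ℝ)^2 * ∑ π ∈ Theta m n, (A π)^2
      ≤ (n:ℝ) * m * N * S + (m:ℝ) * ((m:ℝ) - 1) * (N * S^2) := by
    have hsq : ∀ π, (A π)^2 = ∑ j : Fin m, ∑ k : Fin m, g (π j) * g (π k) := by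
      intro π
      rw [hAdef, sq, Finset.sum_mul_sum]
    have hcomm : ∑ π ∈ Theta m n, (A π)^2
        = ∑ j : Fin m, ∑ k : Fin m, ∑ π ∈ Theta m n, g (π j) * g (π k) := by
      rw [Finset.sum_congr rfl (fun π _ => hsq π)]
      rw [Finset.sum_comm]
      apply Finset.sum_congr rfl
      intro j _
      exact Finset.sum_comm
    rw [hcomm]
    -- split each inner j-sum into k = j and k ≠ j
    have hsplit : ∀ j : Fin m, ∑ k : Fin m, ∑ π ∈ Theta m n, g (π j) * g (π k)
        = (∑ k ∈ univ.erase j, ∑ π ∈ Theta m n, g (π j) * g (π k))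
          + ∑ π ∈ Theta m n, g (π j) * g (π j) := fun j =>
      (Finset.sum_erase_add univ _ (mem_univ j)).symm
    have hdiag : ∀ j : Fin m, (n:ℝ)^2 * ∑ π ∈ Theta m n, g (π j) * g (π j)
        = (n:ℝ) * (N * S) := by
      intro j
      have : ∀ π : Fin m → Fin n, g (π j) * g (π j) = g (π j) := by
        intro π; rcases hg (π j) with h | h <;> rw [h] <;> ring
      rw [Finset.sum_congr rfl (fun π _ => this π)]
      rw [sq, mul_assoc, hsingle j]
    have hoffb : ∀ j : Fin m, ∀ k ∈ univ.erase j,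
        (n:ℝ)^2 * ∑ π ∈ Theta m n, g (π j) * g (π k) ≤ N * S^2 := by
      intro j k hk
      exact sum_pair_le hmn j k (Ne.symm (Finset.ne_of_mem_erase hk)) g hg
    calc (n:ℝ)^2 * ∑ j : Fin m, ∑ k : Fin m, ∑ π ∈ Theta m n, g (π j) * g (π k)
        = ∑ j : Fin m, ((∑ k ∈ univ.erase j, (n:ℝ)^2 * ∑ π ∈ Theta m n, g (π j) * g (π k))
            + (n:ℝ)^2 * ∑ π ∈ Theta m n, g (π j) * g (π j)) := by
          rw [Finset.mul_sum]
          apply Finset.sum_congr rfl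
          intro j _
          rw [hsplit j, mul_add, Finset.mul_sum]
      _ ≤ ∑ j : Fin m, (((m:ℝ) - 1) * (N * S^2) + (n:ℝ) * (N * S)) := by
          apply Finset.sum_le_sum
          intro j _
          rw [hdiag j]
          refine add_le_add ?_ le_rfl
          calc ∑ k ∈ univ.erase j, (n:ℝ)^2 * ∑ π ∈ Theta m n, g (π j) * g (π k)
              ≤ ∑ _k ∈ univ.erase j, N * S^2 := Finset.sum_le_sum (hoffb j)
            _ = ((m:ℝ) - 1) * (N * S^2) := by
                rw [Finset.sum_const, nsmul_eq_mul, Finset.card_erase_of_mem (mem_univ j),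
                  Finset.card_univ, Fintype.card_fin]
                congr 1
                have : (1:ℕ) ≤ m := hm
                push_cast [Nat.cast_sub this]
                ring
      _ = (n:ℝ) * m * N * S + (m:ℝ) * ((m:ℝ) - 1) * (N * S^2) := by
          rw [Finset.sum_const, nsmul_eq_mul, Finset.card_univ, Fintype.card_fin]
          ring
  -- expansion of E
  have expand : (m:ℝ)^2 * (n:ℝ)^2 * E
      = (n:ℝ)^2 * (∑ π ∈ Theta m n, (A π)^2)
        - 2 * m * n * S * (∑ π ∈ Theta m n, A π) + N * ((m:ℝ)^2 * S^2) := by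
    have hpt : ∀ π, (m:ℝ)^2 * (n:ℝ)^2 * (A π / m - S / n)^2
        = (n:ℝ)^2 * (A π)^2 - 2 * m * n * S * (A π) + (m:ℝ)^2 * S^2 := by
      intro π
      field_simp
      ring
    rw [hEdef, Finset.mul_sum, Finset.sum_congr rfl (fun π _ => hpt π),
      Finset.sum_add_distrib, Finset.sum_sub_distrib, ← Finset.mul_sum, ← Finset.mul_sum,
      Finset.sum_const, nsmul_eq_mul]
    try ring
  -- combine
  have hA' : 2 * (m:ℝ) * S * ((n:ℝ) * ∑ π ∈ Theta m n, A π) = 2 * (m:ℝ) * S * ((m:ℝ) * N * S) := by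
    rw [hA]
  have hNS2 : (0:ℝ) ≤ (m:ℝ) * (N * S^2) := by positivity
  have final : (m:ℝ)^2 * (n:ℝ)^2 * E ≤ (m:ℝ) * n * (N * S) := by nlinarith [expand, hA2, hA', hNS2]
  have hgoal : E ≤ (m:ℝ) * n * (N * S) / ((m:ℝ)^2 * (n:ℝ)^2) := by
    rw [le_div_iff₀ (by positivity)]
    linarith
  calc E ≤ (m:ℝ) * n * (N * S) / ((m:ℝ)^2 * (n:ℝ)^2) := hgoal
    _ = N * (S / n) / m := by field_simp

theorem expected_sampling_error_le
    {Z : Type*} [Fintype Z] [DecidableEq Z] (m n : ℕ) (hm : 1 ≤ m) (hmn : m ≤ n)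
    (z : Fin n → Z) :
    (1 / ((Theta m n).card : ℝ)) * ∑ π ∈ Theta m n,
        Real.sqrt (∑ a : Z, (typeOf (fun i => z (π i)) a - typeOf z a) ^ 2)
      ≤ 1 / Real.sqrt m := by
  classical
  have hn : 1 ≤ n := le_trans hm hmn
  have hmR : (1:ℝ) ≤ m := by exact_mod_cast hm
  have hNpos : 0 < (Theta m n).card :=
    Finset.card_pos.mpr ⟨fun j => Fin.castLE hmn j, mem_Theta.mpr (Fin.castLE_injective hmn)⟩
  set N := ((Theta m n).card : ℝ) with hNdef
  have hN0 : (0:ℝ) < N := by rw [hNdef]; exact_mod_cast hNpos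
  set g : Z → Fin n → ℝ := fun a i => if z i = a then 1 else 0 with hgdef
  have hg : ∀ a i, g a i = 0 ∨ g a i = 1 := by
    intro a i
    by_cases h : z i = a <;> simp [hgdef, h]
  have htype2 : ∀ (π : Fin m → Fin n) (a : Z),
      typeOf (fun i => z (π i)) a = (∑ j, g a (π j)) / m := by
    intro π a
    unfold typeOf
    congr 1
    rw [Finset.card_filter, Nat.cast_sum]
    apply Finset.sum_congr rfl
    intro j _
    by_cases h : z (π j) = a <;> simp [hgdef, h]
  have htype1 : ∀ a : Z, typeOf z a = (∑ i, g a i) / n := by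
    intro a
    unfold typeOf
    congr 1
    rw [Finset.card_filter, Nat.cast_sum]
    apply Finset.sum_congr rfl
    intro i _
    by_cases h : z i = a <;> simp [hgdef, h]
  -- the error as a function of π
  set err : (Fin m → Fin n) → ℝ :=
    fun π => ∑ a : Z, (typeOf (fun i => z (π i)) a - typeOf z a) ^ 2 with herrdef
  have herr0 : ∀ π, 0 ≤ err π := fun π => Finset.sum_nonneg fun a _ => sq_nonneg _
  -- second moment bound
  have key : ∑ π ∈ Theta m n, err π ≤ N / m := by
    have hswap : ∑ π ∈ Theta m n, err π
        = ∑ a : Z, ∑ π ∈ Theta m n,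
            ((∑ j, g a (π j)) / m - (∑ i, g a i) / n) ^ 2 := by
      rw [herrdef, Finset.sum_comm]
      apply Finset.sum_congr rfl
      intro a _
      apply Finset.sum_congr rfl
      intro π _
      rw [htype2 π a, htype1 a]
    have hsumS : ∑ a : Z, ∑ i, g a i = n := by
      rw [Finset.sum_comm]
      have h1 : ∀ i : Fin n, ∑ a : Z, g a i = 1 := by
        intro i
        rw [Finset.sum_eq_single (z i)]
        · simp [hgdef]
        · intro b _ hb; simp [hgdef, Ne.symm hb]
        · intro h; exact absurd (Finset.mem_univ _) h
      rw [Finset.sum_congr rfl (fun i _ => h1 i)]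
      simp
    calc ∑ π ∈ Theta m n, err π
        = ∑ a : Z, ∑ π ∈ Theta m n,
            ((∑ j, g a (π j)) / m - (∑ i, g a i) / n) ^ 2 := hswap
      _ ≤ ∑ a : Z, N * ((∑ i, g a i) / n) / m :=
          Finset.sum_le_sum fun a _ => per_a hm hmn (g a) (hg a)
      _ = N / m := by
          have : ∀ a : Z, N * ((∑ i, g a i) / n) / m = (N / (n * m)) * (∑ i, g a i) := by
            intro a; field_simp; try ring
          rw [Finset.sum_congr rfl (fun a _ => this a), ← Finset.mul_sum, hsumS]
          have hn0 : (n:ℝ) ≠ 0 := by positivity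
          field_simp
  -- Cauchy-Schwarz
  have hcs := Finset.sum_mul_sq_le_sq_mul_sq (Theta m n) (fun _ => (1:ℝ))
    (fun π => Real.sqrt (err π))
  simp only [one_mul, one_pow] at hcs
  have hcs' : (∑ π ∈ Theta m n, Real.sqrt (err π)) ^ 2 ≤ N * (N / m) := by
    calc (∑ π ∈ Theta m n, Real.sqrt (err π)) ^ 2
        ≤ (∑ _π ∈ Theta m n, (1:ℝ)) * ∑ π ∈ Theta m n, Real.sqrt (err π) ^ 2 := hcs
      _ = N * ∑ π ∈ Theta m n, err π := by
          rw [Finset.sum_const, nsmul_eq_mul, mul_one,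
            Finset.sum_congr rfl (fun π _ => Real.sq_sqrt (herr0 π))]
      _ ≤ N * (N / m) := by
          apply mul_le_mul_of_nonneg_left key (le_of_lt hN0)
  have hsqrt : ∑ π ∈ Theta m n, Real.sqrt (err π) ≤ N / Real.sqrt m := by
    have hrhs : N * (N / m) = (N / Real.sqrt m) ^ 2 := by
      rw [div_pow, Real.sq_sqrt (by positivity : (0:ℝ) ≤ m)]
      ring
    have hsum0 : 0 ≤ ∑ π ∈ Theta m n, Real.sqrt (err π) :=
      Finset.sum_nonneg fun π _ => Real.sqrt_nonneg _
    nlinarith [hcs', hrhs, hsum0, div_nonneg (le_of_lt hN0) (Real.sqrt_nonneg (m:ℝ))]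
  calc (1 / N) * ∑ π ∈ Theta m n, Real.sqrt (err π)
      ≤ (1 / N) * (N / Real.sqrt m) := by
        apply mul_le_mul_of_nonneg_left hsqrt (by positivity)
    _ = 1 / Real.sqrt m := by
        field_simp
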